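/- arXiv:2304.13351 — 4 statements merged into one kernel-verified Lean document; each statement's English description precedes it below -/
import Mathlib

section
/- For every pair of natural numbers n, m ≥ 1 there exists a constant C > 0 (depending only on n and m) such that for all N ≥ 1 one has ‖[(S_+^N)^n, (S_-^N)^m]‖ ≤ C · N^{n+m−1}. -/
open scoped BigOperators

/-- Pauli matrices. -/
noncomputable def pauliX : Matrix (Fin 2) (Fin 2) ℂ := !![0, 1; 1, 0]
noncomputable def pauliY : Matrix (Fin 2) (Fin 2) ℂ := !![0, -Complex.I; Complex.I, 0]
noncomputable def pauliZ : Matrix (Fin 2) (Fin 2) ℂ := !![1, 0; 0, -1]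

/-- The operator `A` acting on the `k`-th tensor factor of `(ℂ²)^{⊗N}` (identity elsewhere),
realized as a matrix indexed by the product basis `Fin N → Fin 2`. -/
noncomputable def siteOp (N : ℕ) (A : Matrix (Fin 2) (Fin 2) ℂ) (k : Fin N) :
    Matrix (Fin N → Fin 2) (Fin N → Fin 2) ℂ :=
  fun x y => A (x k) (y k) * ∏ j ∈ Finset.univ.erase k, (if x j = y j then (1 : ℂ) else 0)

/-- Collective spin operator `(1/2) Σ_k A^{(k)}`. -/
noncomputable def collSpin (N : ℕ) (A : Matrix (Fin 2) (Fin 2) ℂ) :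
    Matrix (Fin N → Fin 2) (Fin N → Fin 2) ℂ :=
  (1 / 2 : ℂ) • ∑ k : Fin N, siteOp N A k

noncomputable def Sx (N : ℕ) := collSpin N pauliX
noncomputable def Sy (N : ℕ) := collSpin N pauliY
noncomputable def Sz (N : ℕ) := collSpin N pauliZ
noncomputable def Splus (N : ℕ) := Sx N + Complex.I • Sy N
noncomputable def Sminus (N : ℕ) := Sx N - Complex.I • Sy N

/-- The operator norm (ℓ²→ℓ²) of a square complex matrix. -/
noncomputable def opNorm {n : Type*} [Fintype n] [DecidableEq n] (M : Matrix n n ℂ) : ℝ :=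
  ‖Matrix.toEuclideanCLM (𝕜 := ℂ) M‖

set_option synthInstance.maxHeartbeats 1000000
set_option maxHeartbeats 1000000

lemma siteOp_apply {N : ℕ} (A : Matrix (Fin 2) (Fin 2) ℂ) (k : Fin N) (x y : Fin N → Fin 2) :
    siteOp N A k x y = A (x k) (y k) * (if ∀ j, j ≠ k → x j = y j then 1 else 0) := by
  unfold siteOp
  congr 1
  rw [Finset.prod_boole]
  simp [Finset.mem_erase]

lemma sum_update {N : ℕ} (k : Fin N) (x : Fin N → Fin 2) (f : (Fin N → Fin 2) → ℂ) :
    ∑ z : Fin N → Fin 2, (if ∀ j, j ≠ k → x j = z j then (1:ℂ) else 0) * f z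
      = ∑ t : Fin 2, f (Function.update x k t) := by
  have h1 : ∀ z : Fin N → Fin 2, (if ∀ j, j ≠ k → x j = z j then (1:ℂ) else 0)
      = ∑ t : Fin 2, if z = Function.update x k t then 1 else 0 := by
    intro z
    rw [Finset.sum_eq_single (z k)]
    · congr 1
      apply propext
      constructor
      · intro h
        funext j
        by_cases hj : j = k
        · subst hj; simp
        · rw [Function.update_of_ne hj]
          exact (h j hj).symm
      · intro h j hj
        rw [h, Function.update_of_ne hj]
    · intro t _ ht
      rw [if_neg]
      intro h
      apply ht
      rw [h]; simp
    · simp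
  simp_rw [h1, Finset.sum_mul, boole_mul]
  rw [Finset.sum_comm]
  simp [Finset.sum_ite_eq']

lemma siteOp_mul_same {N : ℕ} (A B : Matrix (Fin 2) (Fin 2) ℂ) (k : Fin N) :
    siteOp N A k * siteOp N B k = siteOp N (A * B) k := by
  funext x y
  show (siteOp N A k * siteOp N B k) x y = _
  rw [Matrix.mul_apply, siteOp_apply]
  simp_rw [siteOp_apply]
  have : ∀ z : Fin N → Fin 2,
      A (x k) (z k) * (if ∀ j, j ≠ k → x j = z j then (1:ℂ) else 0) *
        (B (z k) (y k) * (if ∀ j, j ≠ k → z j = y j then 1 else 0))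
      = (if ∀ j, j ≠ k → x j = z j then (1:ℂ) else 0) *
          (A (x k) (z k) * (B (z k) (y k) * (if ∀ j, j ≠ k → z j = y j then 1 else 0))) := by
    intro z; ring
  simp_rw [this, sum_update]
  have h2 : ∀ t : Fin 2, (∀ j, j ≠ k → Function.update x k t j = y j) ↔ (∀ j, j ≠ k → x j = y j) := by
    intro t
    constructor
    · intro h j hj; have := h j hj; rwa [Function.update_of_ne hj] at this
    · intro h j hj; rw [Function.update_of_ne hj]; exact h j hj
  have h3 : ∀ t : Fin 2,
      A (x k) (Function.update x k t k) *
        (B (Function.update x k t k) (y k) *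
          (if ∀ j, j ≠ k → Function.update x k t j = y j then (1:ℂ) else 0))
      = A (x k) t * B t (y k) * (if ∀ j, j ≠ k → x j = y j then (1:ℂ) else 0) := by
    intro t
    rw [Function.update_self]
    rw [if_congr (h2 t) rfl rfl]
    ring
  simp_rw [h3]
  rw [← Finset.sum_mul, ← Matrix.mul_apply]

lemma siteOp_mul_ne {N : ℕ} (A B : Matrix (Fin 2) (Fin 2) ℂ) (k l : Fin N) (hkl : k ≠ l) :
    siteOp N A k * siteOp N B l
      = fun x y => A (x k) (y k) * B (x l) (y l) *
          (if ∀ j, j ≠ k → j ≠ l → x j = y j then (1:ℂ) else 0) := by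
  funext x y
  show (siteOp N A k * siteOp N B l) x y = _
  rw [Matrix.mul_apply]
  simp_rw [siteOp_apply]
  have : ∀ z : Fin N → Fin 2,
      A (x k) (z k) * (if ∀ j, j ≠ k → x j = z j then (1:ℂ) else 0) *
        (B (z l) (y l) * (if ∀ j, j ≠ l → z j = y j then 1 else 0))
      = (if ∀ j, j ≠ k → x j = z j then (1:ℂ) else 0) *
          (A (x k) (z k) * (B (z l) (y l) * (if ∀ j, j ≠ l → z j = y j then 1 else 0))) := by
    intro z; ring
  simp_rw [this, sum_update]
  have h2 : ∀ t : Fin 2, (∀ j, j ≠ l → Function.update x k t j = y j) ↔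
      (t = y k ∧ ∀ j, j ≠ k → j ≠ l → x j = y j) := by
    intro t
    constructor
    · intro h
      refine ⟨?_, ?_⟩
      · have := h k hkl; rwa [Function.update_self] at this
      · intro j hjk hjl
        have := h j hjl; rwa [Function.update_of_ne hjk] at this
    · rintro ⟨ht, h⟩ j hjl
      by_cases hjk : j = k
      · subst hjk; rwa [Function.update_self]
      · rw [Function.update_of_ne hjk]; exact h j hjk hjl
  have h3 : ∀ t : Fin 2,
      A (x k) (Function.update x k t k) *
        (B (Function.update x k t l) (y l) *
          (if ∀ j, j ≠ l → Function.update x k t j = y j then (1:ℂ) else 0))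
      = if t = y k then A (x k) t * B (x l) (y l) *
          (if ∀ j, j ≠ k → j ≠ l → x j = y j then (1:ℂ) else 0) else 0 := by
    intro t
    rw [Function.update_self, Function.update_of_ne (Ne.symm hkl), if_congr (h2 t) rfl rfl]
    by_cases ht : t = y k <;>
      by_cases hc : ∀ j, j ≠ k → j ≠ l → x j = y j <;>
        simp [ht, hc] <;> ring
  simp_rw [h3]
  rw [Finset.sum_ite_eq' Finset.univ (y k)]
  simp

lemma siteOp_comm {N : ℕ} (A B : Matrix (Fin 2) (Fin 2) ℂ) (k l : Fin N) (hkl : k ≠ l) :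
    siteOp N A k * siteOp N B l = siteOp N B l * siteOp N A k := by
  rw [siteOp_mul_ne A B k l hkl, siteOp_mul_ne B A l k (Ne.symm hkl)]
  funext x y
  have : (∀ j, j ≠ k → j ≠ l → x j = y j) ↔ (∀ j, j ≠ l → j ≠ k → x j = y j) := by tauto
  rw [if_congr this rfl rfl]
  ring

lemma siteOp_one {N : ℕ} (k : Fin N) : siteOp N (1 : Matrix (Fin 2) (Fin 2) ℂ) k = 1 := by
  funext x y
  rw [siteOp_apply, Matrix.one_apply, Matrix.one_apply]
  by_cases hxy : x = y
  · subst hxy; simp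
  · rw [if_neg hxy]
    obtain ⟨j, hj⟩ : ∃ j, x j ≠ y j := by
      by_contra h
      push_neg at h
      exact hxy (funext h)
    by_cases hjk : j = k
    · subst hjk; rw [if_neg hj]; ring
    · rw [if_neg (show ¬∀ j, j ≠ k → x j = y j from fun h => hj (h j hjk))]; ring

lemma siteOp_conjTranspose {N : ℕ} (A : Matrix (Fin 2) (Fin 2) ℂ) (k : Fin N) :
    (siteOp N A k).conjTranspose = siteOp N A.conjTranspose k := by
  funext x y
  rw [Matrix.conjTranspose_apply, siteOp_apply, siteOp_apply, Matrix.conjTranspose_apply,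
    star_mul']
  have h : (∀ j, j ≠ k → y j = x j) ↔ (∀ j, j ≠ k → x j = y j) := by
    constructor <;> intro h j hj <;> exact (h j hj).symm
  rw [if_congr h rfl rfl]
  congr 1
  by_cases hc : ∀ j, j ≠ k → x j = y j <;> simp [hc]

lemma siteOp_sub {N : ℕ} (A B : Matrix (Fin 2) (Fin 2) ℂ) (k : Fin N) :
    siteOp N A k - siteOp N B k = siteOp N (A - B) k := by
  funext x y
  show siteOp N A k x y - siteOp N B k x y = _
  rw [siteOp_apply, siteOp_apply, siteOp_apply, Matrix.sub_apply]
  ring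

noncomputable def sigmaP : Matrix (Fin 2) (Fin 2) ℂ := !![0, 1; 0, 0]
noncomputable def sigmaM : Matrix (Fin 2) (Fin 2) ℂ := !![0, 0; 1, 0]

lemma pauliX_herm : pauliX.conjTranspose = pauliX := by
  ext i j; fin_cases i <;> fin_cases j <;> simp [pauliX]
lemma pauliY_herm : pauliY.conjTranspose = pauliY := by
  ext i j; fin_cases i <;> fin_cases j <;> simp [pauliY]
lemma pauliZ_herm : pauliZ.conjTranspose = pauliZ := by
  ext i j; fin_cases i <;> fin_cases j <;> simp [pauliZ]
lemma pauliX_sq : pauliX * pauliX = 1 := by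
  rw [pauliX, Matrix.mul_fin_two, Matrix.one_fin_two]; norm_num
lemma pauliY_sq : pauliY * pauliY = 1 := by
  rw [pauliY, Matrix.mul_fin_two, Matrix.one_fin_two]; norm_num [Complex.I_mul_I]
lemma pauliZ_sq : pauliZ * pauliZ = 1 := by
  rw [pauliZ, Matrix.mul_fin_two, Matrix.one_fin_two]; norm_num

lemma sigmaP_decomp : sigmaP = (1/2 : ℂ) • pauliX + (Complex.I/2) • pauliY := by
  ext i j; fin_cases i <;> fin_cases j <;>
    simp [sigmaP, pauliX, pauliY] <;> ring_nf <;> simp [Complex.I_sq] <;> ring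

lemma sigmaM_decomp : sigmaM = (1/2 : ℂ) • pauliX - (Complex.I/2) • pauliY := by
  ext i j; fin_cases i <;> fin_cases j <;>
    simp [sigmaM, pauliX, pauliY] <;> ring_nf <;> simp [Complex.I_sq] <;> ring

lemma sigma_comm : sigmaP * sigmaM - sigmaM * sigmaP = pauliZ := by
  rw [sigmaP, sigmaM, pauliZ, Matrix.mul_fin_two, Matrix.mul_fin_two]
  norm_num
  refine ⟨?_, ?_, ?_⟩ <;> ext i <;> fin_cases i <;> simp


lemma siteOp_add {N : ℕ} (A B : Matrix (Fin 2) (Fin 2) ℂ) (k : Fin N) :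
    siteOp N (A + B) k = siteOp N A k + siteOp N B k := by
  funext x y
  show _ = siteOp N A k x y + siteOp N B k x y
  rw [siteOp_apply, siteOp_apply, siteOp_apply, Matrix.add_apply]
  ring

lemma siteOp_smul {N : ℕ} (c : ℂ) (A : Matrix (Fin 2) (Fin 2) ℂ) (k : Fin N) :
    siteOp N (c • A) k = c • siteOp N A k := by
  funext x y
  show _ = c • siteOp N A k x y
  rw [siteOp_apply, siteOp_apply, Matrix.smul_apply, smul_eq_mul, smul_eq_mul]
  ring

lemma Splus_eq (N : ℕ) : Splus N = ∑ k : Fin N, siteOp N sigmaP k := by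
  have : ∀ k : Fin N, siteOp N sigmaP k
      = (1/2 : ℂ) • siteOp N pauliX k + (Complex.I/2) • siteOp N pauliY k := by
    intro k
    rw [← siteOp_smul, ← siteOp_smul, ← siteOp_add, ← sigmaP_decomp]
  simp_rw [this, Finset.sum_add_distrib, ← Finset.smul_sum]
  rw [Splus, Sx, Sy, collSpin, collSpin, smul_smul]
  have h : Complex.I * (1/2 : ℂ) = Complex.I / 2 := by ring
  rw [h]

lemma Sminus_eq (N : ℕ) : Sminus N = ∑ k : Fin N, siteOp N sigmaM k := by
  have : ∀ k : Fin N, siteOp N sigmaM k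
      = (1/2 : ℂ) • siteOp N pauliX k - (Complex.I/2) • siteOp N pauliY k := by
    intro k
    rw [← siteOp_smul, ← siteOp_smul, siteOp_sub, ← sigmaM_decomp]
  simp_rw [this, Finset.sum_sub_distrib, ← Finset.smul_sum]
  rw [Sminus, Sx, Sy, collSpin, collSpin, smul_smul]
  have h : Complex.I * (1/2 : ℂ) = Complex.I / 2 := by ring
  rw [h]

lemma comm_eq (N : ℕ) :
    Splus N * Sminus N - Sminus N * Splus N = ∑ k : Fin N, siteOp N pauliZ k := by
  rw [Splus_eq, Sminus_eq, Finset.sum_mul_sum, Finset.sum_mul_sum]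
  rw [Finset.sum_comm (s := Finset.univ) (t := Finset.univ)
    (f := fun l k => siteOp N sigmaM l * siteOp N sigmaP k)]
  rw [← Finset.sum_sub_distrib]
  congr 1
  funext k
  rw [← Finset.sum_sub_distrib]
  rw [Finset.sum_eq_single k]
  · rw [siteOp_mul_same, siteOp_mul_same, siteOp_sub, sigma_comm]
  · intro l _ hlk
    rw [siteOp_comm sigmaP sigmaM k l (Ne.symm hlk), sub_self]
  · simp


lemma norm_siteOp_le_one {N : ℕ} (U : Matrix (Fin 2) (Fin 2) ℂ)
    (h1 : U.conjTranspose = U) (h2 : U * U = 1) (k : Fin N) :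
    ‖Matrix.toEuclideanCLM (𝕜 := ℂ) (siteOp N U k)‖ ≤ 1 := by
  set T := Matrix.toEuclideanCLM (𝕜 := ℂ) (siteOp N U k) with hT
  have hstar : star T = T := by
    rw [hT, ← map_star]
    congr 1
    rw [Matrix.star_eq_conjTranspose, siteOp_conjTranspose, h1]
  have hTT : T * T = 1 := by
    rw [hT, ← map_mul, siteOp_mul_same, h2, siteOp_one, map_one]
  have hsq : ‖T‖ * ‖T‖ = 1 := by
    rw [← CStarRing.norm_star_mul_self, hstar, hTT, norm_one]
  nlinarith [norm_nonneg T]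

lemma norm_sum_pauli_le {N : ℕ} (U : Matrix (Fin 2) (Fin 2) ℂ)
    (h1 : U.conjTranspose = U) (h2 : U * U = 1) :
    ‖Matrix.toEuclideanCLM (𝕜 := ℂ) (∑ k : Fin N, siteOp N U k)‖ ≤ N := by
  rw [map_sum]
  refine le_trans (norm_sum_le _ _) ?_
  refine le_trans (Finset.sum_le_sum fun k _ => norm_siteOp_le_one U h1 h2 k) ?_
  simp

lemma norm_Splus_le (N : ℕ) : ‖Matrix.toEuclideanCLM (𝕜 := ℂ) (Splus N)‖ ≤ N := by
  have hd : Splus N = (1/2 : ℂ) • (∑ k : Fin N, siteOp N pauliX k)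
      + (Complex.I/2) • (∑ k : Fin N, siteOp N pauliY k) := by
    rw [Splus, Sx, Sy, collSpin, collSpin, smul_smul]
    have h : Complex.I * (1/2 : ℂ) = Complex.I / 2 := by ring
    rw [h]
  rw [hd, map_add, map_smul, map_smul]
  refine le_trans (norm_add_le _ _) ?_
  rw [norm_smul ((1:ℂ)/2) (Matrix.toEuclideanCLM (𝕜 := ℂ) (∑ k : Fin N, siteOp N pauliX k)),
    norm_smul (Complex.I/2) (Matrix.toEuclideanCLM (𝕜 := ℂ) (∑ k : Fin N, siteOp N pauliY k))]
  have hx := norm_sum_pauli_le (N := N) pauliX pauliX_herm pauliX_sq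
  have hy := norm_sum_pauli_le (N := N) pauliY pauliY_herm pauliY_sq
  have e1 : ‖(1/2 : ℂ)‖ = 1/2 := by norm_num
  have e2 : ‖(Complex.I/2 : ℂ)‖ = 1/2 := by
    rw [norm_div]; simp
  rw [e1, e2]
  nlinarith [norm_nonneg (Matrix.toEuclideanCLM (𝕜 := ℂ) (∑ k : Fin N, siteOp N pauliX k)),
    norm_nonneg (Matrix.toEuclideanCLM (𝕜 := ℂ) (∑ k : Fin N, siteOp N pauliY k))]

lemma norm_Sminus_le (N : ℕ) : ‖Matrix.toEuclideanCLM (𝕜 := ℂ) (Sminus N)‖ ≤ N := by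
  have hd : Sminus N = (1/2 : ℂ) • (∑ k : Fin N, siteOp N pauliX k)
      - (Complex.I/2) • (∑ k : Fin N, siteOp N pauliY k) := by
    rw [Sminus, Sx, Sy, collSpin, collSpin, smul_smul]
    have h : Complex.I * (1/2 : ℂ) = Complex.I / 2 := by ring
    rw [h]
  rw [hd, map_sub, map_smul, map_smul]
  refine le_trans (norm_sub_le _ _) ?_
  rw [norm_smul ((1:ℂ)/2) (Matrix.toEuclideanCLM (𝕜 := ℂ) (∑ k : Fin N, siteOp N pauliX k)),
    norm_smul (Complex.I/2) (Matrix.toEuclideanCLM (𝕜 := ℂ) (∑ k : Fin N, siteOp N pauliY k))]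
  have hx := norm_sum_pauli_le (N := N) pauliX pauliX_herm pauliX_sq
  have hy := norm_sum_pauli_le (N := N) pauliY pauliY_herm pauliY_sq
  have e1 : ‖(1/2 : ℂ)‖ = 1/2 := by norm_num
  have e2 : ‖(Complex.I/2 : ℂ)‖ = 1/2 := by
    rw [norm_div]; simp
  rw [e1, e2]
  nlinarith [norm_nonneg (Matrix.toEuclideanCLM (𝕜 := ℂ) (∑ k : Fin N, siteOp N pauliX k)),
    norm_nonneg (Matrix.toEuclideanCLM (𝕜 := ℂ) (∑ k : Fin N, siteOp N pauliY k))]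

lemma norm_comm_le (N : ℕ) :
    ‖Matrix.toEuclideanCLM (𝕜 := ℂ) (Splus N * Sminus N - Sminus N * Splus N)‖ ≤ N := by
  rw [comm_eq]
  exact norm_sum_pauli_le pauliZ pauliZ_herm pauliZ_sq

lemma comm_pow_bound {A : Type*} [NormedRing A] (a c : A) (R E : ℝ)
    (hR : 0 ≤ R) (hE : 0 ≤ E) (ha : ‖a‖ ≤ R) (hac : ‖a * c - c * a‖ ≤ E) :
    ∀ n : ℕ, ‖a ^ (n + 1) * c - c * a ^ (n + 1)‖ ≤ (n + 1) * E * R ^ n := by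
  intro n
  induction n with
  | zero => simpa using hac
  | succ n ih =>
    have key : a ^ (n + 2) * c - c * a ^ (n + 2)
        = a ^ (n + 1) * (a * c - c * a) + (a ^ (n + 1) * c - c * a ^ (n + 1)) * a := by
      rw [pow_succ]
      noncomm_ring
    rw [key]
    refine le_trans (norm_add_le _ _) ?_
    have h1 : ‖a ^ (n + 1) * (a * c - c * a)‖ ≤ R ^ (n + 1) * E := by
      refine le_trans (norm_mul_le _ _) ?_
      exact mul_le_mul (le_trans (norm_pow_le' a (Nat.succ_pos n))
        (pow_le_pow_left₀ (norm_nonneg a) ha _)) hac (norm_nonneg _) (pow_nonneg hR _)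
    have h2 : ‖(a ^ (n + 1) * c - c * a ^ (n + 1)) * a‖ ≤ ((n + 1) * E * R ^ n) * R := by
      refine le_trans (norm_mul_le _ _) ?_
      refine mul_le_mul ih ha (norm_nonneg a) ?_
      positivity
    calc ‖a ^ (n + 1) * (a * c - c * a)‖ + ‖(a ^ (n + 1) * c - c * a ^ (n + 1)) * a‖
        ≤ R ^ (n + 1) * E + ((n + 1) * E * R ^ n) * R := add_le_add h1 h2
      _ = ((n:ℝ) + 1 + 1) * E * R ^ (n + 1) := by ring
      _ = ((n + 1 : ℕ) + 1 : ℝ) * E * R ^ (n + 1) := by push_cast; ring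

/-- For every n, m ≥ 1 there is a constant C > 0 (depending only on n,m) such that for
all N ≥ 1, ‖[(S_+^N)^n, (S_-^N)^m]‖ ≤ C · N^(n+m-1). -/
theorem collective_spin_commutator_bound (n m : ℕ) (hn : 1 ≤ n) (hm : 1 ≤ m) :
    ∃ C : ℝ, 0 < C ∧ ∀ N : ℕ, 1 ≤ N →
      opNorm ((Splus N) ^ n * (Sminus N) ^ m - (Sminus N) ^ m * (Splus N) ^ n)
        ≤ C * (N : ℝ) ^ (n + m - 1) := by
  obtain ⟨n', rfl⟩ : ∃ n', n = n' + 1 := ⟨n - 1, by omega⟩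
  obtain ⟨m', rfl⟩ : ∃ m', m = m' + 1 := ⟨m - 1, by omega⟩
  refine ⟨((n' : ℝ) + 1) * ((m' : ℝ) + 1), by positivity, ?_⟩
  intro N hN
  set x := Matrix.toEuclideanCLM (𝕜 := ℂ) (Splus N) with hxdef
  set y := Matrix.toEuclideanCLM (𝕜 := ℂ) (Sminus N) with hydef
  have hR : (0:ℝ) ≤ N := Nat.cast_nonneg N
  have hx : ‖x‖ ≤ (N : ℝ) := norm_Splus_le N
  have hy : ‖y‖ ≤ (N : ℝ) := norm_Sminus_le N
  have hcomm : ‖x * y - y * x‖ ≤ (N : ℝ) := by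
    have h := norm_comm_le N
    rw [map_sub, map_mul, map_mul] at h
    exact h
  have h1 := comm_pow_bound x y (N : ℝ) (N : ℝ) hR hR hx hcomm n'
  have h1' : ‖y * x ^ (n' + 1) - x ^ (n' + 1) * y‖ ≤ ((n' : ℝ) + 1) * N * (N : ℝ) ^ n' := by
    rw [norm_sub_rev]; exact h1
  have h2 := comm_pow_bound y (x ^ (n' + 1)) (N : ℝ) (((n' : ℝ) + 1) * N * (N : ℝ) ^ n')
    hR (by positivity) hy h1' m'
  have h3 : opNorm (Splus N ^ (n' + 1) * Sminus N ^ (m' + 1)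
        - Sminus N ^ (m' + 1) * Splus N ^ (n' + 1))
      = ‖x ^ (n' + 1) * y ^ (m' + 1) - y ^ (m' + 1) * x ^ (n' + 1)‖ := by
    simp only [opNorm]
    rw [map_sub, map_mul, map_mul, map_pow, map_pow]
  rw [h3]
  have hexp : n' + 1 + (m' + 1) - 1 = n' + m' + 1 := by omega
  rw [hexp]
  calc ‖x ^ (n' + 1) * y ^ (m' + 1) - y ^ (m' + 1) * x ^ (n' + 1)‖
      = ‖y ^ (m' + 1) * x ^ (n' + 1) - x ^ (n' + 1) * y ^ (m' + 1)‖ := norm_sub_rev _ _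
    _ ≤ ((m' : ℝ) + 1) * (((n' : ℝ) + 1) * N * (N : ℝ) ^ n') * (N : ℝ) ^ m' := h2
    _ = ((n' : ℝ) + 1) * ((m' : ℝ) + 1) * (N : ℝ) ^ (n' + m' + 1) := by ring
end

section
/- Fix β_c > 0 and β > 0. The gap consistency equation tanh(βω) = β_c·ω has a solution ω > 0 if and only if β > β_c, and when β > β_c this positive solution is unique. -/
open Real Set Filter Topology

private lemma continuous_tanh' : Continuous Real.tanh := by
  have heq : Real.tanh = fun x => Real.sinh x / Real.cosh x := by
    funext y; exact Real.tanh_eq_sinh_div_cosh y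
  rw [heq]
  exact Real.continuous_sinh.div Real.continuous_cosh fun x => (Real.cosh_pos x).ne'

private lemma hasDerivAt_tanh' (x : ℝ) :
    HasDerivAt Real.tanh (1 / Real.cosh x ^ 2) x := by
  have h := (Real.hasDerivAt_sinh x).div (Real.hasDerivAt_cosh x) (Real.cosh_pos x).ne'
  have heq : Real.tanh = fun x => Real.sinh x / Real.cosh x := by
    funext y; exact Real.tanh_eq_sinh_div_cosh y
  rw [heq]
  refine h.congr_deriv ?_
  have := Real.cosh_sq_sub_sinh_sq x
  field_simp
  nlinarith [this]

private lemma tanh_lt_self {x : ℝ} (hx : 0 < x) : Real.tanh x < x := by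
  -- equivalent to sinh x < x * cosh x
  have key : Real.sinh x < x * Real.cosh x := by
    have h : ∀ y : ℝ, HasDerivAt (fun y => y * Real.cosh y - Real.sinh y)
        (y * Real.sinh y) y := by
      intro y
      have := ((hasDerivAt_id y).mul (Real.hasDerivAt_cosh y)).sub (Real.hasDerivAt_sinh y)
      exact this.congr_deriv (by simp only [id]; ring)
    have hmono : StrictMonoOn (fun y => y * Real.cosh y - Real.sinh y) (Set.Ici 0) := by
      apply strictMonoOn_of_deriv_pos (convex_Ici 0)
      · exact (Continuous.sub (continuous_id.mul Real.continuous_cosh)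
          Real.continuous_sinh).continuousOn
      · intro y hy
        rw [interior_Ici] at hy
        rw [(h y).deriv]
        exact mul_pos hy (Real.sinh_pos_iff.2 hy)
    have := hmono (Set.self_mem_Ici) (Set.mem_Ici.2 hx.le) hx
    simpa using this
  rw [Real.tanh_eq_sinh_div_cosh, div_lt_iff₀ (Real.cosh_pos x)]
  exact key

private lemma tanh_lt_one' (x : ℝ) : Real.tanh x < 1 := by
  rw [Real.tanh_eq_sinh_div_cosh, div_lt_one (Real.cosh_pos x)]
  exact Real.sinh_lt_cosh x

private lemma strictConcave_tanh_beta {β : ℝ} (hβ : 0 < β) :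
    StrictConcaveOn ℝ (Set.Ici (0:ℝ)) (fun x => Real.tanh (β * x)) := by
  have hd1 : ∀ x : ℝ, HasDerivAt (fun x => Real.tanh (β * x))
      (β / Real.cosh (β * x) ^ 2) x := by
    intro x
    have := (hasDerivAt_tanh' (β * x)).comp x ((hasDerivAt_id x).const_mul β)
    simpa [mul_comm, div_eq_mul_inv, Function.comp_def] using this
  have hderiv : deriv (fun x => Real.tanh (β * x)) = fun x => β / Real.cosh (β * x) ^ 2 := by
    funext x; exact (hd1 x).deriv
  apply strictConcaveOn_of_deriv2_neg (convex_Ici 0)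
  · exact (continuous_tanh'.comp (continuous_const.mul continuous_id)).continuousOn
  · intro x hx
    rw [interior_Ici] at hx
    have hd2 : HasDerivAt (fun x => β / Real.cosh (β * x) ^ 2)
        (-(β * (2 * Real.cosh (β * x) * (Real.sinh (β * x) * β))) /
          (Real.cosh (β * x) ^ 2) ^ 2) x := by
      have hc : HasDerivAt (fun x => Real.cosh (β * x) ^ 2)
          (2 * Real.cosh (β * x) * (Real.sinh (β * x) * β)) x := by
        have hb : HasDerivAt (fun x : ℝ => β * x) β x := by
          simpa using (hasDerivAt_id x).const_mul β
        have h1 : HasDerivAt (fun x => Real.cosh (β * x)) (Real.sinh (β * x) * β) x :=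
          (Real.hasDerivAt_cosh (β * x)).comp x hb
        have := h1.pow 2
        simpa [mul_comm, mul_assoc, mul_left_comm, Pi.pow_def] using this
      have := (hasDerivAt_const x β).div hc (by positivity)
      simpa [Pi.div_def] using this
    have : deriv^[2] (fun x => Real.tanh (β * x)) x =
        -(β * (2 * Real.cosh (β * x) * (Real.sinh (β * x) * β))) /
          (Real.cosh (β * x) ^ 2) ^ 2 := by
      rw [Function.iterate_succ, Function.iterate_one, Function.comp_apply, hderiv]
      exact hd2.deriv
    rw [this]
    apply div_neg_of_neg_of_pos
    · have hs : 0 < Real.sinh (β * x) := Real.sinh_pos_iff.2 (mul_pos hβ hx)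
      have hc := Real.cosh_pos (β * x)
      have hpos : 0 < β * (2 * Real.cosh (β * x) * (Real.sinh (β * x) * β)) := by positivity
      linarith
    · positivity

/-- The gap consistency equation `tanh(βω) = β_c·ω` has a positive solution iff `β > β_c`,
and when `β > β_c` the positive solution is unique. -/
theorem gap_equation_solution (βc β : ℝ) (hβc : 0 < βc) (hβ : 0 < β) :
    ((∃ ω : ℝ, 0 < ω ∧ Real.tanh (β * ω) = βc * ω) ↔ βc < β) ∧
    (βc < β → ∃! ω : ℝ, 0 < ω ∧ Real.tanh (β * ω) = βc * ω) := by
  -- uniqueness of positive solutions (when they exist)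
  have huniq : ∀ ω₁ ω₂ : ℝ, 0 < ω₁ → Real.tanh (β * ω₁) = βc * ω₁ →
      0 < ω₂ → Real.tanh (β * ω₂) = βc * ω₂ → ω₁ = ω₂ := by
    have key : ∀ ω₁ ω₂ : ℝ, 0 < ω₁ → Real.tanh (β * ω₁) = βc * ω₁ →
        0 < ω₂ → Real.tanh (β * ω₂) = βc * ω₂ → ω₁ < ω₂ → False := by
      intro ω₁ ω₂ h₁ he₁ h₂ he₂ hlt
      have hsc := strictConcave_tanh_beta hβ
      set a : ℝ := ω₁ / ω₂ with ha
      have ha0 : 0 < a := div_pos h₁ h₂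
      have ha1 : 0 < 1 - a := by
        have : a < 1 := (div_lt_one h₂).2 hlt
        linarith
      have hcomb := hsc.2 (Set.mem_Ici.2 h₂.le) (Set.mem_Ici.2 (le_refl (0:ℝ)))
        h₂.ne' ha0 ha1 (by ring)
      simp only [smul_eq_mul, mul_zero, add_zero] at hcomb
      have hax : a * ω₂ = ω₁ := by rw [ha]; field_simp
      rw [hax, he₁, he₂, Real.tanh_zero] at hcomb
      have : a * (βc * ω₂) = βc * ω₁ := by rw [← hax]; ring
      linarith
    intro ω₁ ω₂ h₁ he₁ h₂ he₂
    rcases lt_trichotomy ω₁ ω₂ with h | h | h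
    · exact absurd (key ω₁ ω₂ h₁ he₁ h₂ he₂ h) not_false
    · exact h
    · exact absurd (key ω₂ ω₁ h₂ he₂ h₁ he₁ h) not_false
  -- existence when βc < β
  have hex : βc < β → ∃ ω : ℝ, 0 < ω ∧ Real.tanh (β * ω) = βc * ω := by
    intro hlt
    set F : ℝ → ℝ := fun x => Real.tanh (β * x) - βc * x with hF
    have hFcont : Continuous F :=
      (continuous_tanh'.comp (continuous_const.mul continuous_id)).sub
        (continuous_const.mul continuous_id)
    -- F is positive for small positive x, using the derivative at 0
    have hd0 : HasDerivAt (fun x => Real.tanh (β * x)) β 0 := by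
      have := (hasDerivAt_tanh' (β * 0)).comp 0 ((hasDerivAt_id 0).const_mul β)
      simpa [Function.comp_def] using this
    have ht : Tendsto (slope (fun x => Real.tanh (β * x)) 0) (𝓝[≠] 0) (𝓝 β) :=
      hasDerivAt_iff_tendsto_slope.1 hd0
    have ht' : Tendsto (slope (fun x => Real.tanh (β * x)) 0) (𝓝[>] 0) (𝓝 β) :=
      ht.mono_left (nhdsWithin_mono 0 fun y hy => ne_of_gt hy)
    set M : ℝ := 2 / βc with hM
    have hM0 : 0 < M := by positivity
    have hev1 : ∀ᶠ y in 𝓝[>] (0:ℝ), βc < slope (fun x => Real.tanh (β * x)) 0 y :=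
      ht'.eventually (eventually_gt_nhds hlt)
    have hev2 : ∀ᶠ y in 𝓝[>] (0:ℝ), y < M :=
      eventually_nhdsWithin_of_eventually_nhds (eventually_lt_nhds hM0)
    obtain ⟨x₀, hx₀s, hx₀M, hx₀0⟩ :
        ∃ x₀ : ℝ, βc < slope (fun x => Real.tanh (β * x)) 0 x₀ ∧ x₀ < M ∧ 0 < x₀ := by
      have := (hev1.and (hev2.and (eventually_mem_nhdsWithin (s := Set.Ioi (0:ℝ))))).exists
      obtain ⟨x₀, h1, h2, h3⟩ := this
      exact ⟨x₀, h1, h2, h3⟩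
    have hFx₀ : 0 < F x₀ := by
      have hs : slope (fun x => Real.tanh (β * x)) 0 x₀ = Real.tanh (β * x₀) / x₀ := by
        simp [slope_def_field]
      rw [hs] at hx₀s
      have := (lt_div_iff₀ hx₀0).1 hx₀s
      simp only [hF]
      linarith
    have hFM : F M < 0 := by
      have h1 : Real.tanh (β * M) < 1 := tanh_lt_one' _
      have h2 : βc * M = 2 := by rw [hM]; field_simp
      simp only [hF]
      linarith
    obtain ⟨ω, hωmem, hωeq⟩ : ∃ ω ∈ Set.Icc x₀ M, F ω = 0 := by
      have := intermediate_value_Icc' hx₀M.le hFcont.continuousOn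
        (Set.mem_Icc.2 ⟨hFM.le, hFx₀.le⟩)
      obtain ⟨ω, hmem, heq⟩ := this
      exact ⟨ω, hmem, heq⟩
    refine ⟨ω, lt_of_lt_of_le hx₀0 hωmem.1, ?_⟩
    have : Real.tanh (β * ω) - βc * ω = 0 := hωeq
    linarith
  -- forward direction: a solution forces βc < β
  have hfwd : (∃ ω : ℝ, 0 < ω ∧ Real.tanh (β * ω) = βc * ω) → βc < β := by
    rintro ⟨ω, hω, he⟩
    have h1 : Real.tanh (β * ω) < β * ω := tanh_lt_self (mul_pos hβ hω)
    rw [he] at h1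
    exact (mul_lt_mul_iff_of_pos_right hω).1 (by linarith)
  constructor
  · exact ⟨hfwd, fun h => hex h⟩
  · intro h
    obtain ⟨ω, hω, he⟩ := hex h
    exact ⟨ω, ⟨hω, he⟩, fun y ⟨hy, hye⟩ => huniq y ω hy hye hω he⟩
end

section
/- Fix β_c > 0 and for each β > β_c let Δ(β) be the unique positive solution of 2Δ = tanh(2βΔ/β_c). Then Δ(β) → 1/2 as β → ∞, and lim_{β→β_c⁺} Δ(β)/√(1 − β_c/β) = √3/2; equivalently, writing T = 1/β and T_c = 1/β_c, the gap behaves as Δ(T) ≈ √3·Δ(0)·(1 − T/T_c)^{1/2} near the critical temperature, with Δ(0) = 1/2. -/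
open Filter Topology

namespace GapAux

lemma tanh_hasDerivAt (x : ℝ) : HasDerivAt Real.tanh (1 - Real.tanh x ^ 2) x := by
  have hs := Real.hasDerivAt_sinh x
  have hc := Real.hasDerivAt_cosh x
  have h := hs.div hc (Real.cosh_pos x).ne'
  have hfun : Real.tanh = fun y => Real.sinh y / Real.cosh y :=
    funext fun y => Real.tanh_eq_sinh_div_cosh y
  rw [hfun]
  refine h.congr_deriv ?_
  have h1 : Real.cosh x ^ 2 - Real.sinh x ^ 2 = 1 := Real.cosh_sq_sub_sinh_sq x
  have h2 : Real.cosh x ≠ 0 := (Real.cosh_pos x).ne'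
  beta_reduce
  field_simp

lemma tanh_differentiable : Differentiable ℝ Real.tanh :=
  fun x => (tanh_hasDerivAt x).differentiableAt

lemma deriv_tanh (x : ℝ) : deriv Real.tanh x = 1 - Real.tanh x ^ 2 :=
  (tanh_hasDerivAt x).deriv

lemma tanh_lt_one (x : ℝ) : Real.tanh x < 1 := by
  rw [Real.tanh_eq_sinh_div_cosh]
  exact (div_lt_one (Real.cosh_pos x)).2 (Real.sinh_lt_cosh x)

lemma tanh_nonneg {x : ℝ} (hx : 0 ≤ x) : 0 ≤ Real.tanh x := by
  rw [Real.tanh_eq_sinh_div_cosh]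
  exact div_nonneg (Real.sinh_nonneg_iff.2 hx) (Real.cosh_pos x).le

lemma neg_one_lt_tanh (x : ℝ) : -1 < Real.tanh x := by
  have := tanh_lt_one (-x)
  rw [Real.tanh_neg] at this
  linarith

lemma tanh_sq_lt_one (x : ℝ) : Real.tanh x ^ 2 < 1 := by
  nlinarith [tanh_lt_one x, neg_one_lt_tanh x]

lemma tanh_strictMono : StrictMono Real.tanh := by
  apply strictMono_of_deriv_pos
  intro x
  rw [deriv_tanh]
  linarith [tanh_sq_lt_one x]

lemma tanh_le_self {x : ℝ} (hx : 0 ≤ x) : Real.tanh x ≤ x := by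
  have hd : ∀ y : ℝ, HasDerivAt (fun y => y - Real.tanh y) (1 - (1 - Real.tanh y ^ 2)) y :=
    fun y => (hasDerivAt_id y).sub (tanh_hasDerivAt y)
  have hmono : Monotone (fun y => y - Real.tanh y) :=
    monotone_of_deriv_nonneg (fun y => (hd y).differentiableAt)
      (fun y => by rw [(hd y).deriv]; nlinarith [sq_nonneg (Real.tanh y)])
  have := hmono hx
  simp only [Real.tanh_zero, sub_zero] at this
  linarith

lemma tanh_sq_le_sq (x : ℝ) : Real.tanh x ^ 2 ≤ x ^ 2 := by
  rcases le_total 0 x with h | h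
  · nlinarith [tanh_le_self h, tanh_nonneg h]
  · have h' : 0 ≤ -x := by linarith
    have := tanh_le_self h'
    rw [Real.tanh_neg] at this
    have h2 : 0 ≤ -Real.tanh x := by rw [← Real.tanh_neg]; exact tanh_nonneg h'
    nlinarith

lemma tanh_sq_le_tanh_sq {z w : ℝ} (h : |z| ≤ |w|) :
    Real.tanh z ^ 2 ≤ Real.tanh w ^ 2 := by
  have h1 : Real.tanh z ^ 2 = Real.tanh |z| ^ 2 := by
    rcases abs_choice z with h' | h' <;> rw [h'] <;> simp [Real.tanh_neg]
  have h2 : Real.tanh w ^ 2 = Real.tanh |w| ^ 2 := by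
    rcases abs_choice w with h' | h' <;> rw [h'] <;> simp [Real.tanh_neg]
  rw [h1, h2]
  have := tanh_strictMono.monotone h
  exact pow_le_pow_left₀ (tanh_nonneg (abs_nonneg z)) this 2


/-- concavity-type inequality: `l * tanh y ≤ tanh (l * y)` for `l ∈ [0,1]`, `y ≥ 0`. -/
lemma mul_tanh_le {l y : ℝ} (h0 : 0 ≤ l) (h1 : l ≤ 1) (hy : 0 ≤ y) :
    l * Real.tanh y ≤ Real.tanh (l * y) := by
  have hd : ∀ z : ℝ, HasDerivAt (fun z => Real.tanh (l * z) - l * Real.tanh z)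
      ((1 - Real.tanh (l * z) ^ 2) * l - l * (1 - Real.tanh z ^ 2)) z := by
    intro z
    have h1 : HasDerivAt (fun z : ℝ => Real.tanh (l * z)) ((1 - Real.tanh (l * z) ^ 2) * l) z := by
      have := (tanh_hasDerivAt (l * z)).comp z ((hasDerivAt_id z).const_mul l)
      simpa [mul_comm, Function.comp_def] using this
    exact h1.sub ((tanh_hasDerivAt z).const_mul l)
  have hmono : Monotone (fun z => Real.tanh (l * z) - l * Real.tanh z) := by
    apply monotone_of_deriv_nonneg (fun z => (hd z).differentiableAt)
    intro z
    rw [(hd z).deriv]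
    have hsq : Real.tanh (l * z) ^ 2 ≤ Real.tanh z ^ 2 := by
      apply tanh_sq_le_tanh_sq
      rw [abs_mul]
      calc |l| * |z| ≤ 1 * |z| := by
            apply mul_le_mul_of_nonneg_right _ (abs_nonneg z)
            rwa [abs_of_nonneg h0]
        _ = |z| := one_mul _
    nlinarith
  have := hmono hy
  simp only [mul_zero, Real.tanh_zero] at this
  linarith

/-- `u - u^3/3 ≤ tanh u` for `u ≥ 0`. -/
lemma cubic_le_tanh {u : ℝ} (hu : 0 ≤ u) : u - u ^ 3 / 3 ≤ Real.tanh u := by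
  have hd : ∀ z : ℝ, HasDerivAt (fun z => Real.tanh z - z + z ^ 3 / 3)
      ((1 - Real.tanh z ^ 2) - 1 + 3 * z ^ 2 / 3) z := by
    intro z
    exact ((tanh_hasDerivAt z).sub (hasDerivAt_id z)).add
      (((hasDerivAt_pow 3 z).div_const 3).congr_deriv (by ring))
  have hmono : Monotone (fun z => Real.tanh z - z + z ^ 3 / 3) := by
    apply monotone_of_deriv_nonneg (fun z => (hd z).differentiableAt)
    intro z
    rw [(hd z).deriv]
    nlinarith [tanh_sq_le_sq z]
  have := hmono hu
  simp only [Real.tanh_zero] at this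
  norm_num at this
  linarith

/-- `tanh u ≤ u - u^3/3 + 2/15 u^5` for `u ≥ 0`. -/
lemma tanh_le_quintic {u : ℝ} (hu : 0 ≤ u) :
    Real.tanh u ≤ u - u ^ 3 / 3 + 2 / 15 * u ^ 5 := by
  have key : ∀ z : ℝ, 0 ≤ Real.tanh z ^ 2 - z ^ 2 + 2 / 3 * z ^ 4 := by
    have keyn : ∀ z : ℝ, 0 ≤ z → 0 ≤ Real.tanh z ^ 2 - z ^ 2 + 2 / 3 * z ^ 4 := by
      intro z hz
      by_cases h3 : z ^ 2 ≤ 3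
      · have hc : 0 ≤ z - z ^ 3 / 3 := by nlinarith
        have h4 := cubic_le_tanh hz
        have h5 : (z - z ^ 3 / 3) ^ 2 ≤ Real.tanh z ^ 2 := by
          exact pow_le_pow_left₀ hc h4 2
        nlinarith [pow_two_nonneg (z ^ 3)]
      · nlinarith [sq_nonneg (Real.tanh z), sq_nonneg z]
    intro z
    rcases le_total 0 z with h | h
    · exact keyn z h
    · have := keyn (-z) (by linarith)
      rw [Real.tanh_neg] at this
      nlinarith
  have hd : ∀ z : ℝ, HasDerivAt (fun z => z - z ^ 3 / 3 + 2 / 15 * z ^ 5 - Real.tanh z)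
      (1 - 3 * z ^ 2 / 3 + 2 / 15 * (5 * z ^ 4) - (1 - Real.tanh z ^ 2)) z := by
    intro z
    exact (((hasDerivAt_id z).sub ((hasDerivAt_pow 3 z).div_const 3)).add
      (((hasDerivAt_pow 5 z).const_mul (2/15)).congr_deriv (by ring))).sub (tanh_hasDerivAt z)
  have hmono : Monotone (fun z => z - z ^ 3 / 3 + 2 / 15 * z ^ 5 - Real.tanh z) := by
    apply monotone_of_deriv_nonneg (fun z => (hd z).differentiableAt)
    intro z
    rw [(hd z).deriv]
    nlinarith [key z]
  have := hmono hu
  simp only [Real.tanh_zero] at this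
  norm_num at this
  linarith

/-- `1 - 2 * exp (-2*y) ≤ tanh y` for `y ≥ 0`. -/
lemma tanh_lower_exp {y : ℝ} (hy : 0 ≤ y) : 1 - 2 * Real.exp (-(2 * y)) ≤ Real.tanh y := by
  have hc := Real.cosh_pos y
  have h1 : 1 - Real.tanh y = Real.exp (-y) / Real.cosh y := by
    rw [Real.tanh_eq_sinh_div_cosh, ← Real.cosh_sub_sinh]
    field_simp
  have h2 : Real.exp y / 2 ≤ Real.cosh y := by
    rw [Real.cosh_eq]
    have := (Real.exp_pos (-y)).le
    linarith
  have h3 : Real.exp (-y) / Real.cosh y ≤ Real.exp (-y) / (Real.exp y / 2) := by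
    apply div_le_div_of_nonneg_left (Real.exp_pos (-y)).le (by positivity) h2
  have h4 : Real.exp (-y) / (Real.exp y / 2) = 2 * Real.exp (-(2 * y)) := by
    rw [eq_comm, eq_div_iff (by positivity),
      show (2:ℝ) * Real.exp (-(2*y)) * (Real.exp y / 2) = Real.exp (-(2*y)) * Real.exp y by ring,
      ← Real.exp_add]
    ring_nf
  linarith [h1 ▸ h3, h4 ▸ h3]


lemma arith_low {e t : ℝ} (he0 : 0 < e) (he2 : e ≤ 1/2) (ht1 : 1 < t)
    (ht2 : t < 1 + e/25) : (1-e)^2 * t^2 * (t-1) < t - 1 := by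
  have htpos : (0:ℝ) < t := by linarith
  have h1 : (1-e) * t < 1 := by nlinarith
  have h2 : ((1-e) * t)^2 < 1 := by
    nlinarith [mul_pos (show (0:ℝ) < 1-e by linarith) htpos]
  calc (1-e)^2 * t^2 * (t-1) = ((1-e)*t)^2 * (t-1) := by ring
    _ < 1 * (t-1) := mul_lt_mul_of_pos_right h2 (by linarith)
    _ = t - 1 := one_mul _

lemma arith_high {e t : ℝ} (he0 : 0 < e) (he2 : e ≤ 1/2) (ht1 : 1 < t)
    (ht2 : t < 1 + e/25) :
    t - 1 < (1+e)^2 * t^2 * (t-1) - 6/5 * (1+e)^4 * t^3 * (t-1)^2 := by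
  have htpos : (0:ℝ) < t := by linarith
  have hfac : 1 < (1+e)^2 * t^2 - 6/5 * (1+e)^4 * t^3 * (t-1) := by
    have hA : 1 + 2*e ≤ (1+e)^2 * t^2 := by
      have h1 : (1:ℝ) ≤ t^2 := by nlinarith
      calc 1 + 2*e ≤ (1+e)^2 := by nlinarith [sq_nonneg e]
        _ = (1+e)^2 * 1 := (mul_one _).symm
        _ ≤ (1+e)^2 * t^2 := mul_le_mul_of_nonneg_left h1 (by positivity)
    have hb1 : (1+e)^4 ≤ 81/16 := by
      have h1 : (1+e)^2 ≤ 9/4 := by nlinarith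
      calc (1+e)^4 = ((1+e)^2)^2 := by ring
        _ ≤ (9/4)^2 := pow_le_pow_left₀ (by positivity) h1 2
        _ = 81/16 := by norm_num
    have ht3 : t^3 ≤ 2 := by
      have h1 : t ≤ 51/50 := by linarith
      calc t^3 ≤ (51/50)^3 := pow_le_pow_left₀ htpos.le h1 3
        _ ≤ 2 := by norm_num
    have m1 : (1+e)^4 * t^3 ≤ 81/16 * 2 :=
      mul_le_mul hb1 ht3 (by positivity) (by norm_num)
    have m2 : (1+e)^4 * t^3 * (t-1) ≤ 81/16 * 2 * (e/25) :=
      mul_le_mul m1 (by linarith) (by linarith) (by norm_num)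
    linarith
  have hmul := mul_lt_mul_of_pos_left hfac (show (0:ℝ) < t - 1 by linarith)
  nlinarith [hmul]

lemma tendsto_tanh_atTop : Tendsto Real.tanh atTop (𝓝 1) := by
  have hlo : Tendsto (fun y : ℝ => 1 - 2 * Real.exp (-(2 * y))) atTop (𝓝 1) := by
    have h1 : Tendsto (fun y : ℝ => 2 * y) atTop atTop :=
      (tendsto_id (α := ℝ)).const_mul_atTop two_pos
    have h2 : Tendsto (fun y : ℝ => Real.exp (-(2 * y))) atTop (𝓝 0) :=
      Real.tendsto_exp_neg_atTop_nhds_zero.comp h1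
    have := tendsto_const_nhds (x := (1:ℝ)) (f := atTop).sub (h2.const_mul 2)
    simpa using this
  apply tendsto_of_tendsto_of_tendsto_of_le_of_le' hlo tendsto_const_nhds
  · filter_upwards [eventually_ge_atTop (0:ℝ)] with y hy using tanh_lower_exp hy
  · filter_upwards with y using (tanh_lt_one y).le

lemma root_lt {βc β x0 d : ℝ} (hβc : 0 < βc) (hβ : βc < β) (hd : 0 < d)
    (heq : 2 * d = Real.tanh (2 * β * d / βc)) (hx0 : 0 < x0)
    (h : 2 * x0 < Real.tanh (2 * β * x0 / βc)) : x0 < d := by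
  by_contra hcon
  push_neg at hcon
  have hβ0 : 0 < β := hβc.trans hβ
  set l := d / x0 with hl_def
  have hl0 : 0 < l := div_pos hd hx0
  have hl1 : l ≤ 1 := (div_le_one hx0).2 hcon
  have hY : 0 ≤ 2 * β * x0 / βc := by positivity
  have hmul : 2 * β * d / βc = l * (2 * β * x0 / βc) := by
    rw [hl_def]; field_simp
  have h1 := mul_tanh_le hl0.le hl1 hY
  have h2 : l * (2 * x0) < l * Real.tanh (2 * β * x0 / βc) :=
    mul_lt_mul_of_pos_left h hl0
  have h3 : l * (2 * x0) = 2 * d := by rw [hl_def]; field_simp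
  rw [← hmul, ← heq] at h1
  linarith

lemma root_gt {βc β x0 d : ℝ} (hβc : 0 < βc) (hβ : βc < β) (hd : 0 < d)
    (heq : 2 * d = Real.tanh (2 * β * d / βc)) (hx0 : 0 < x0)
    (h : Real.tanh (2 * β * x0 / βc) < 2 * x0) : d < x0 := by
  by_contra hcon
  push_neg at hcon
  have hβ0 : 0 < β := hβc.trans hβ
  set l := x0 / d with hl_def
  have hl0 : 0 < l := div_pos hx0 hd
  have hl1 : l ≤ 1 := (div_le_one hd).2 hcon
  have hY : 0 ≤ 2 * β * d / βc := by positivity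
  have hmul : 2 * β * x0 / βc = l * (2 * β * d / βc) := by
    rw [hl_def]; field_simp
  have h1 := mul_tanh_le hl0.le hl1 hY
  have h3 : l * (2 * d) = 2 * x0 := by rw [hl_def]; field_simp
  rw [← heq, h3, ← hmul] at h1
  linarith

end GapAux

set_option maxHeartbeats 1000000 in
open GapAux in
/-- Let Δ(β) be the unique positive solution of `2Δ = tanh(2βΔ/β_c)` for β > β_c. Then
Δ(β) → 1/2 as β → ∞ (i.e. Δ(0) = 1/2), and Δ(β)/√(1 − β_c/β) → √3/2 as β → β_c⁺;
equivalently Δ(T) ≈ √3·Δ(0)·(1 − T/T_c)^{1/2} near the critical temperature. -/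
theorem gap_asymptotics (βc : ℝ) (hβc : 0 < βc) (Δ : ℝ → ℝ)
    (hΔ : ∀ β, βc < β → 0 < Δ β ∧ 2 * Δ β = Real.tanh (2 * β * Δ β / βc)) :
    Tendsto Δ atTop (𝓝 (1 / 2)) ∧
    Tendsto (fun β => Δ β / Real.sqrt (1 - βc / β)) (𝓝[>] βc) (𝓝 (Real.sqrt 3 / 2)) := by
  constructor
  · rw [Metric.tendsto_nhds]
    intro ε hε
    set e := min ε (1/2) with he_def
    have he0 : 0 < e := lt_min hε (by norm_num)
    have he1 : e ≤ ε := min_le_left _ _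
    have he2 : e ≤ 1/2 := min_le_right _ _
    set x0 := 1/2 - e/2 with hx0_def
    have hx0pos : 0 < x0 := by rw [hx0_def]; linarith
    have h2x0 : 2 * x0 < 1 := by rw [hx0_def]; linarith
    have hcomp : Tendsto (fun β => 2 * β * x0 / βc) atTop atTop := by
      have : Tendsto (fun β : ℝ => β * (2 * x0 / βc)) atTop atTop :=
        (tendsto_id (α := ℝ)).atTop_mul_const (by positivity)
      refine this.congr fun β => by ring
    have hev1 : ∀ᶠ β in atTop, 2 * x0 < Real.tanh (2 * β * x0 / βc) :=
      (tendsto_tanh_atTop.comp hcomp).eventually (eventually_gt_nhds h2x0)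
    filter_upwards [hev1, eventually_gt_atTop βc] with β h1 h2
    obtain ⟨hpos, heq⟩ := hΔ β h2
    have hlt : Δ β < 1/2 := by
      have := tanh_lt_one (2 * β * Δ β / βc); linarith
    have hgt : x0 < Δ β := root_lt hβc h2 hpos heq hx0pos h1
    rw [hx0_def] at hgt
    rw [Real.dist_eq, abs_lt]
    constructor <;> linarith
  · rw [Metric.tendsto_nhds]
    intro ε hε
    set e := min (ε/2) (1/2) with he_def
    have he0 : 0 < e := lt_min (by linarith) (by norm_num)
    have he1 : e ≤ ε/2 := min_le_left _ _
    have he2 : e ≤ 1/2 := min_le_right _ _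
    have hmem : Set.Ioo βc (βc * (1 + e/25)) ∈ 𝓝[>] βc := by
      apply Ioo_mem_nhdsGT_of_mem
      constructor
      · exact le_refl βc
      · calc βc = βc * 1 := (mul_one βc).symm
          _ < βc * (1 + e/25) := by
            exact mul_lt_mul_of_pos_left (by linarith) hβc
    filter_upwards [hmem] with β hβ
    obtain ⟨hβ1, hβ2⟩ := hβ
    obtain ⟨hpos, heq⟩ := hΔ β hβ1
    have hβ0 : 0 < β := hβc.trans hβ1
    set t := β / βc with ht_def
    have ht1 : 1 < t := (one_lt_div hβc).2 hβ1
    have ht2 : t < 1 + e/25 := by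
      rw [ht_def, div_lt_iff₀ hβc]
      linarith [hβ2, mul_comm βc (1 + e/25)]
    have htpos : (0:ℝ) < t := by linarith
    have ht0 : t ≠ 0 := ne_of_gt htpos
    set s := 1 - βc / β with hs_def
    have hs0 : 0 < s := by
      rw [hs_def]
      have : βc / β < 1 := (div_lt_one hβ0).2 hβ1
      linarith
    have hsq : Real.sqrt s ^ 2 = s := Real.sq_sqrt hs0.le
    have hsqpos : 0 < Real.sqrt s := Real.sqrt_pos.2 hs0
    have hs1 : s = (t - 1) / t := by
      rw [hs_def, ht_def]
      field_simp
    have h3 : Real.sqrt 3 ^ 2 = 3 := Real.sq_sqrt (by norm_num)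
    have h3pos : 0 < Real.sqrt 3 := Real.sqrt_pos.2 (by norm_num)
    have h3lt : Real.sqrt 3 < 2 := by
      rw [show (2:ℝ) = Real.sqrt 4 by rw [show (4:ℝ) = 2^2 by norm_num, Real.sqrt_sq (by norm_num)]]
      exact Real.sqrt_lt_sqrt (by norm_num) (by norm_num)
    set a := Real.sqrt 3 / 2 * (1 - e) with ha_def
    set b := Real.sqrt 3 / 2 * (1 + e) with hb_def
    have ha0 : 0 < a := by
      rw [ha_def]; exact mul_pos (by positivity) (by linarith)
    have hb0 : 0 < b := by rw [hb_def]; positivity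
    have ha2 : a ^ 2 = 3/4 * (1 - e)^2 := by rw [ha_def, mul_pow, div_pow, h3]; ring
    have hb2 : b ^ 2 = 3/4 * (1 + e)^2 := by rw [hb_def, mul_pow, div_pow, h3]; ring
    -- lower bound
    have hlow : a * Real.sqrt s < Δ β := by
      apply root_lt hβc hβ1 hpos heq (by positivity)
      have hu0 : (0:ℝ) ≤ 2 * β * (a * Real.sqrt s) / βc := by positivity
      refine lt_of_lt_of_le ?_ (cubic_le_tanh hu0)
      have hut : 2 * β * (a * Real.sqrt s) / βc = 2 * t * (a * Real.sqrt s) := by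
        rw [ht_def]; field_simp
      rw [hut]
      set x := a * Real.sqrt s with hx_def
      have hx0 : 0 < x := by rw [hx_def]; positivity
      have hx2 : x ^ 2 = a ^ 2 * ((t - 1) / t) := by
        rw [hx_def, mul_pow, hsq, hs1]
      have e1 : 4/3 * t^3 * x^2 = (1-e)^2 * t^2 * (t-1) := by
        rw [hx2, ha2]; field_simp
      have key : 4/3 * t^3 * x^2 < t - 1 := by
        rw [e1]; exact arith_low he0 he2 ht1 ht2
      have hmul := mul_lt_mul_of_pos_left key hx0
      linarith [hmul]
    -- upper bound
    have hhigh : Δ β < b * Real.sqrt s := by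
      apply root_gt hβc hβ1 hpos heq (by positivity)
      have hu0 : (0:ℝ) ≤ 2 * β * (b * Real.sqrt s) / βc := by positivity
      refine lt_of_le_of_lt (tanh_le_quintic hu0) ?_
      have hut : 2 * β * (b * Real.sqrt s) / βc = 2 * t * (b * Real.sqrt s) := by
        rw [ht_def]; field_simp
      rw [hut]
      set x := b * Real.sqrt s with hx_def
      have hx0 : 0 < x := by rw [hx_def]; positivity
      have hx2 : x ^ 2 = b ^ 2 * ((t - 1) / t) := by
        rw [hx_def, mul_pow, hsq, hs1]
      have e1 : 4/3 * t^3 * x^2 = (1+e)^2 * t^2 * (t-1) := by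
        rw [hx2, hb2]; field_simp
      have e2 : 32/15 * t^5 * x^4 = 6/5 * (1+e)^4 * t^3 * (t-1)^2 := by
        have hx4 : x^4 = (x^2)^2 := by ring
        rw [hx4, hx2, hb2]; field_simp; ring
      have key : t - 1 < 4/3 * t^3 * x^2 - 32/15 * t^5 * x^4 := by
        rw [e1, e2]; exact arith_high he0 he2 ht1 ht2
      have hmul2 := mul_lt_mul_of_pos_left key hx0
      linarith [hmul2]
    -- combine
    have hr1 : a < Δ β / Real.sqrt s := (lt_div_iff₀ hsqpos).2 (by linarith)
    have hr2 : Δ β / Real.sqrt s < b := (div_lt_iff₀ hsqpos).2 (by linarith)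
    rw [ha_def] at hr1
    rw [hb_def] at hr2
    have hse : Real.sqrt 3 * e < 2 * e := mul_lt_mul_of_pos_right h3lt he0
    rw [Real.dist_eq, abs_lt]
    constructor <;> linarith [hse, hr1, hr2]
end

section
/- Let S_z, S_+, S_- be d×d complex matrices satisfying the su(2) relations [S_z, S_±] = ±S_± and [S_+, S_-] = 2S_z, let ε, λ ∈ ℝ, and set H = −2εS_z − λS_+S_- and K = −2ε·𝕀 + 2λS_z. Then [H, S_+] = S_+K, [H, K] = 0, and for all t ∈ ℝ the Heisenberg evolution of S_+ satisfies e^{−itH} S_+ e^{itH} = S_+ · e^{−itK}. -/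
open Complex

lemma exp_semiconj' {d : ℕ} (A B C : Matrix (Fin d) (Fin d) ℂ) (h : A * B = B * C) :
    NormedSpace.exp A * B = B * NormedSpace.exp C := by
  letI : SeminormedRing (Matrix (Fin d) (Fin d) ℂ) := Matrix.linftyOpSemiNormedRing
  letI : NormedRing (Matrix (Fin d) (Fin d) ℂ) := Matrix.linftyOpNormedRing
  letI : NormedAlgebra ℂ (Matrix (Fin d) (Fin d) ℂ) := Matrix.linftyOpNormedAlgebra
  have hn : ∀ n : ℕ, A ^ n * B = B * C ^ n := by
    intro n
    induction n with
    | zero => simp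
    | succ n ih => rw [pow_succ, pow_succ, mul_assoc, h, ← mul_assoc, ih, mul_assoc]
  simp only [NormedSpace.exp_eq_tsum ℂ]
  erw [← (NormedSpace.expSeries_summable' (𝕂 := ℂ) A).tsum_mul_right B,
    ← (NormedSpace.expSeries_summable' (𝕂 := ℂ) C).tsum_mul_left B]
  congr 1
  ext n
  rw [smul_mul_assoc, hn, mul_smul_comm]

/-- For su(2) matrices with H = −2εS_z − λS₊S₋ and K = −2ε𝕀 + 2λS_z one has
[H,S₊] = S₊K, [H,K] = 0, and the Heisenberg evolution e^{−itH} S₊ e^{itH} = S₊ e^{−itK}. -/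
theorem bcs_heisenberg_evolution (d : ℕ) (Sz Sp Sm : Matrix (Fin d) (Fin d) ℂ)
    (hzp : Sz * Sp - Sp * Sz = Sp) (hzm : Sz * Sm - Sm * Sz = -Sm)
    (hpm : Sp * Sm - Sm * Sp = (2 : ℂ) • Sz) (ε lam : ℝ) :
    let H : Matrix (Fin d) (Fin d) ℂ := (-(2 * ε) : ℂ) • Sz - (lam : ℂ) • (Sp * Sm)
    let K : Matrix (Fin d) (Fin d) ℂ :=
      (-(2 * ε) : ℂ) • (1 : Matrix (Fin d) (Fin d) ℂ) + ((2 * lam : ℝ) : ℂ) • Sz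
    (H * Sp - Sp * H = Sp * K) ∧ (H * K - K * H = 0) ∧
    ∀ t : ℝ,
      NormedSpace.exp ((-(Complex.I * t)) • H) * Sp *
          NormedSpace.exp ((Complex.I * t) • H)
        = Sp * NormedSpace.exp ((-(Complex.I * t)) • K) := by
  intro H K
  have hz : Sz * Sp = Sp * Sz + Sp := by rw [eq_add_of_sub_eq hzp]; abel
  have hms : Sm * Sp = Sp * Sm - (2 : ℂ) • Sz := by rw [← hpm]; abel
  have hzm' : Sz * Sm = Sm * Sz - Sm := by rw [eq_add_of_sub_eq hzm]; abel
  have hcomm : Sz * (Sp * Sm) = (Sp * Sm) * Sz := by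
    calc Sz * (Sp * Sm) = (Sz * Sp) * Sm := by rw [mul_assoc]
      _ = (Sp * Sz + Sp) * Sm := by rw [hz]
      _ = Sp * (Sz * Sm) + Sp * Sm := by noncomm_ring
      _ = Sp * (Sm * Sz - Sm) + Sp * Sm := by rw [hzm']
      _ = (Sp * Sm) * Sz := by noncomm_ring
  have h1 : H * Sp - Sp * H = Sp * K := by
    show ((-(2 * ε) : ℂ) • Sz - (lam : ℂ) • (Sp * Sm)) * Sp
        - Sp * ((-(2 * ε) : ℂ) • Sz - (lam : ℂ) • (Sp * Sm))
      = Sp * ((-(2 * ε) : ℂ) • (1 : Matrix (Fin d) (Fin d) ℂ) + ((2 * lam : ℝ) : ℂ) • Sz)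
    push_cast
    simp only [sub_mul, mul_sub, mul_add, smul_mul_assoc, mul_smul_comm, mul_one, mul_assoc]
    rw [hms, hz]
    simp only [mul_sub, mul_add, smul_sub, smul_add, mul_smul_comm, smul_smul]
    module
  have h2 : H * K - K * H = 0 := by
    show ((-(2 * ε) : ℂ) • Sz - (lam : ℂ) • (Sp * Sm)) *
        ((-(2 * ε) : ℂ) • (1 : Matrix (Fin d) (Fin d) ℂ) + ((2 * lam : ℝ) : ℂ) • Sz)
      - ((-(2 * ε) : ℂ) • (1 : Matrix (Fin d) (Fin d) ℂ) + ((2 * lam : ℝ) : ℂ) • Sz) *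
        ((-(2 * ε) : ℂ) • Sz - (lam : ℂ) • (Sp * Sm)) = 0
    push_cast
    simp only [sub_mul, mul_sub, add_mul, mul_add, smul_mul_assoc, mul_smul_comm, mul_one, one_mul,
      smul_smul, mul_assoc, hcomm]
    module
  refine ⟨h1, h2, fun t => ?_⟩
  have hHK : Commute H K := sub_eq_zero.mp h2
  have hsemi : ((-(Complex.I * t)) • H) * Sp
      = Sp * ((-(Complex.I * t)) • H + (-(Complex.I * t)) • K) := by
    have hHSp : H * Sp = Sp * (H + K) := by
      rw [mul_add, ← h1]; noncomm_ring
    rw [smul_mul_assoc, hHSp, ← smul_add, mul_smul_comm]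
  have key := exp_semiconj' _ Sp _ hsemi
  letI : SeminormedRing (Matrix (Fin d) (Fin d) ℂ) := Matrix.linftyOpSemiNormedRing
  letI : NormedRing (Matrix (Fin d) (Fin d) ℂ) := Matrix.linftyOpNormedRing
  letI : NormedAlgebra ℂ (Matrix (Fin d) (Fin d) ℂ) := Matrix.linftyOpNormedAlgebra
  have hc1 : Commute ((-(Complex.I * t)) • K) ((-(Complex.I * t)) • H) :=
    (hHK.symm.smul_left _).smul_right _
  have hc2 : Commute ((-(Complex.I * t)) • H) ((Complex.I * t) • H) :=
    ((Commute.refl H).smul_left _).smul_right _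
  rw [key]
  rw [show (-(Complex.I * t)) • H + (-(Complex.I * t)) • K
      = (-(Complex.I * t)) • K + (-(Complex.I * t)) • H from add_comm _ _,
    Matrix.exp_add_of_commute _ _ hc1, mul_assoc, mul_assoc,
    ← Matrix.exp_add_of_commute _ _ hc2]
  have hzero : (-(Complex.I * t)) • H + (Complex.I * t) • H = 0 := by module
  rw [hzero, NormedSpace.exp_zero, mul_one]
end
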